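/- Three-term recurrence for determinants of tridiagonal k-Toeplitz matrices (appendix, equation (81)): with D_0 := 1 and D_n := det(M_{nk}) for n ≥ 1, the determinants satisfy D_{n+1} = Q^k(0)·D_n − (u_1·u_2⋯u_k)·D_{n−1} for every n ≥ 1, where Q^k(0) = trace(U_k(0)) = trace( [[a_1, −u_1],[1,0]]·[[a_2, −u_2],[1,0]]···[[a_k, −u_k],[1,0]] ). -/

import Mathlib

/-!
Three-term recurrence for determinants of tridiagonal `k`-Toeplitz matrices
(appendix, equation (81)): with `D_0 := 1` and `D_n := det(M_{nk})` for `n ≥ 1`,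
`D_{n+1} = Q^k(0) · D_n − (u_1 ⋯ u_k) · D_{n−1}` for every `n ≥ 1`, where
`Q^k(0) = trace (U_k(0))`.
-/

open Matrix

/-- The tridiagonal `k`-Toeplitz matrix `M_N`. -/
noncomputable def kToeplitz (k : ℕ) (a x y : ℕ → ℂ) (N : ℕ) :
    Matrix (Fin N) (Fin N) ℂ :=
  Matrix.of fun i j =>
    if (i : ℕ) = (j : ℕ) then a ((i : ℕ) % k)
    else if (j : ℕ) = (i : ℕ) + 1 then x ((i : ℕ) % k)
    else if (i : ℕ) = (j : ℕ) + 1 then y ((j : ℕ) % k)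
    else 0

/-- `D_n = det (M_{nk})`; in particular `D_0 = 1` (determinant of the empty matrix). -/
noncomputable def Ddet (k : ℕ) (a x y : ℕ → ℂ) (n : ℕ) : ℂ :=
  (kToeplitz k a x y (n * k)).det

/-- The elementary reduction matrix `U₁(a,u)(z) = [[z+a, -u],[1,0]]`. -/
noncomputable def U1 (a u z : ℂ) : Matrix (Fin 2) (Fin 2) ℂ :=
  !![z + a, -u; 1, 0]

/-- The reduction matrix `U_k(z) = U₁(a_1,u_1)(z) ⋯ U₁(a_k,u_k)(z)`
(with the factor `j = 1`, i.e. index `0`, leftmost). In particular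
`U_k(0) = [[a_1,−u_1],[1,0]] ⋯ [[a_k,−u_k],[1,0]]`. -/
noncomputable def Uk (k : ℕ) (a x y : ℕ → ℂ) (z : ℂ) : Matrix (Fin 2) (Fin 2) ℂ :=
  ((List.range k).map (fun j => U1 (a j) (x j * y j) z)).prod

namespace KTR

lemma succAbove_val {n : ℕ} (p : Fin (n+1)) (i : Fin n) :
    ((p.succAbove i) : ℕ) = if (i:ℕ) < (p:ℕ) then (i:ℕ) else (i:ℕ)+1 := by
  rcases Nat.lt_or_ge (i:ℕ) (p:ℕ) with h | h
  · rw [if_pos h, Fin.succAbove, if_pos (by simpa [Fin.lt_def] using h), Fin.coe_castSucc]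
  · rw [if_neg (by omega), Fin.succAbove, if_neg (by simp only [Fin.lt_def, Fin.coe_castSucc]; omega),
      Fin.val_succ]
variable (k : ℕ) (a x y : ℕ → ℂ)
noncomputable def eT (i j : ℕ) : ℂ :=
  if i = j then a (i % k) else if j = i + 1 then x (i % k)
  else if i = j + 1 then y (j % k) else 0
lemma kT_apply (N : ℕ) (i j : Fin N) :
    kToeplitz k a x y N i j = eT k a x y (i : ℕ) (j : ℕ) := rfl
noncomputable def dd (m : ℕ) : ℂ := (kToeplitz k a x y m).det

lemma kT_rec (m : ℕ) :
    dd k a x y (m+2) = a ((m+1) % k) * dd k a x y (m+1)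
      - (x (m % k) * y (m % k)) * dd k a x y m := by
  show (kToeplitz k a x y (m+2)).det = _
  rw [Matrix.det_succ_row (kToeplitz k a x y (m+2)) (Fin.last (m+1)),
    Fin.sum_univ_castSucc, Fin.sum_univ_castSucc]
  -- kill the Fin m sum
  have hzero : ∀ i : Fin m,
      kToeplitz k a x y (m+2) (Fin.last (m+1)) (i.castSucc.castSucc) = 0 := by
    intro i
    have hi := i.isLt
    rw [kT_apply]
    simp only [Fin.val_last, Fin.coe_castSucc, eT]
    rw [if_neg (by omega), if_neg (by omega), if_neg (by omega)]
  simp only [hzero, mul_zero, zero_mul, Finset.sum_const_zero, zero_add]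
  -- middle term entry: y
  have hmid : kToeplitz k a x y (m+2) (Fin.last (m+1)) ((Fin.last m).castSucc) = y (m % k) := by
    rw [kT_apply]
    simp only [Fin.val_last, Fin.coe_castSucc, eT]
    rw [if_neg (by omega), if_neg (by omega)]
    simp
  -- last term entry: a
  have hlast : kToeplitz k a x y (m+2) (Fin.last (m+1)) (Fin.last (m+1)) = a ((m+1) % k) := by
    rw [kT_apply]
    simp only [Fin.val_last, eT]
    simp
  -- last minor
  have hS2 : (kToeplitz k a x y (m+2)).submatrix (Fin.last (m+1)).succAbove
      (Fin.last (m+1)).succAbove = kToeplitz k a x y (m+1) := by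
    ext i j
    simp only [Matrix.submatrix_apply, Fin.succAbove_last]
    rw [kT_apply, kT_apply]
    simp only [Fin.coe_castSucc]
  -- middle minor
  have hS1 : ((kToeplitz k a x y (m+2)).submatrix (Fin.last (m+1)).succAbove
      ((Fin.last m).castSucc).succAbove).det = x (m % k) * dd k a x y m := by
    set S := (kToeplitz k a x y (m+2)).submatrix (Fin.last (m+1)).succAbove
      ((Fin.last m).castSucc).succAbove with hS
    rw [Matrix.det_succ_column S (Fin.last m), Fin.sum_univ_castSucc]
    have hcol : ∀ i : Fin (m+1), S i (Fin.last m)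
        = if (i:ℕ) = m then x (m % k) else 0 := by
      intro i
      rw [hS, Matrix.submatrix_apply, kT_apply]
      have hr : (((Fin.last (m+1)).succAbove i) : ℕ) = (i:ℕ) := by
        rw [Fin.succAbove_last, Fin.coe_castSucc]
      have hc : ((((Fin.last m).castSucc).succAbove (Fin.last m)) : ℕ) = m + 1 := by
        rw [succAbove_val, Fin.coe_castSucc, Fin.val_last, if_neg (lt_irrefl m)]
      rw [hr, hc]
      by_cases h : (i:ℕ) = m
      · rw [if_pos h, eT, if_neg (by omega), if_pos (by omega), h]
      · have hi := i.isLt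
        rw [if_neg h, eT, if_neg (by omega), if_neg (by omega), if_neg (by omega)]
    simp only [hcol]
    have hne : ∀ i : Fin m, (((i.castSucc : Fin (m+1)):ℕ) = m) = False := by
      intro i; have := i.isLt; simp only [Fin.coe_castSucc]; simp; omega
    simp only [hne, if_false, mul_zero, zero_mul, Finset.sum_const_zero, zero_add,
      Fin.val_last, if_true, eq_self_iff_true]
    have hS2' : S.submatrix (Fin.last m).succAbove (Fin.last m).succAbove
        = kToeplitz k a x y m := by
      ext i j
      rw [Matrix.submatrix_apply, hS, Matrix.submatrix_apply, kT_apply, kT_apply]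
      have hr : (((Fin.last (m+1)).succAbove ((Fin.last m).succAbove i)) : ℕ) = (i:ℕ) := by
        simp only [Fin.succAbove_last, Fin.coe_castSucc]
      have hc : ((((Fin.last m).castSucc).succAbove ((Fin.last m).succAbove j)) : ℕ) = (j:ℕ) := by
        rw [Fin.succAbove_last, succAbove_val, Fin.coe_castSucc, Fin.coe_castSucc, Fin.val_last,
          if_pos j.isLt]
      rw [hr, hc]
    rw [hS2']
    have : ((-1:ℂ))^(m + m) = 1 := by
      rw [show m + m = 2*m from by ring, pow_mul]; norm_num
    rw [this, dd]; simp
  rw [hmid, hlast, hS2, hS1]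
  simp only [Fin.val_last, Fin.coe_castSucc]
  have h1 : ((-1:ℂ))^(m + 1 + m) = -1 := by
    rw [show m + 1 + m = 2*m + 1 from by ring, pow_succ, pow_mul]; norm_num
  have h2 : ((-1:ℂ))^(m + 1 + (m + 1)) = 1 := by
    rw [show m + 1 + (m+1) = 2*(m+1) from by ring, pow_mul]; norm_num
  rw [h1, h2]
  show _ = a ((m+1)%k) * (kToeplitz k a x y (m+1)).det - _
  ring

variable (k : ℕ) (a x y : ℕ → ℂ)

noncomputable def AM (c : ℂ) : Matrix (Fin 2) (Fin 2) ℂ := !![c, -1; 1, 0]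
noncomputable def DM (t : ℂ) : Matrix (Fin 2) (Fin 2) ℂ := !![1, 0; 0, t]
noncomputable def JM : Matrix (Fin 2) (Fin 2) ℂ := !![1, 0; 0, -1]

lemma AMDM (c t : ℂ) : AM c * DM t = !![c, -t; 1, 0] := by
  ext i j
  fin_cases i <;> fin_cases j <;>
    simp [AM, DM, Matrix.mul_apply, Fin.sum_univ_two]

lemma JM_JM : JM * JM = 1 := by
  ext i j
  fin_cases i <;> fin_cases j <;>
    simp [JM, Matrix.mul_apply, Fin.sum_univ_two, Matrix.one_apply]

lemma DM_tr (t : ℂ) : (DM t)ᵀ = DM t := by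
  ext i j
  fin_cases i <;> fin_cases j <;> simp [DM, Matrix.transpose_apply]

lemma AM_tr (c : ℂ) : (AM c)ᵀ = !![c, 1; -1, 0] := by
  ext i j
  fin_cases i <;> fin_cases j <;> simp [AM, Matrix.transpose_apply]

lemma swap_lemma (c t : ℂ) : DM t * AM c * JM = JM * (DM t)ᵀ * (AM c)ᵀ := by
  rw [DM_tr, AM_tr]
  ext i j
  fin_cases i <;> fin_cases j <;>
    simp [AM, DM, JM, Matrix.mul_apply, Fin.sum_univ_two]

noncomputable def TM (m : ℕ) : Matrix (Fin 2) (Fin 2) ℂ :=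
  AM (a ((m+1) % k)) * DM (x (m % k) * y (m % k))

noncomputable def Wt (m : ℕ) : ℕ → Matrix (Fin 2) (Fin 2) ℂ
  | 0 => 1
  | t+1 => TM k a x y (m+t) * Wt m t

lemma TM_shift (c t : ℕ) : TM k a x y (c*k + t) = TM k a x y t := by
  have h1 : (c*k + t + 1) % k = (t+1) % k := by
    rw [show c*k + t + 1 = (t+1) + c*k from by ring, Nat.add_mul_mod_self_right]
  have h2 : (c*k + t) % k = t % k := by
    rw [show c*k + t = t + c*k from by ring, Nat.add_mul_mod_self_right]
  simp [TM, h1, h2]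

lemma Wt_shift (c : ℕ) : ∀ t, Wt k a x y (c*k) t = Wt k a x y 0 t
  | 0 => rfl
  | t+1 => by
    show TM k a x y (c*k + t) * Wt k a x y (c*k) t = TM k a x y (0 + t) * Wt k a x y 0 t
    rw [TM_shift, Wt_shift c t, Nat.zero_add]

lemma det_TM (m : ℕ) : (TM k a x y m).det = x (m % k) * y (m % k) := by
  rw [TM, AMDM, Matrix.det_fin_two_of]; ring

lemma det_Wt : ∀ t, (Wt k a x y 0 t).det = ∏ j ∈ Finset.range t, x (j % k) * y (j % k)
  | 0 => by simp [Wt]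
  | t+1 => by
    show (TM k a x y (0 + t) * Wt k a x y 0 t).det = _
    rw [Nat.zero_add, Matrix.det_mul, det_TM, det_Wt t, Finset.prod_range_succ]
    ring

noncomputable def pP : ℕ → Matrix (Fin 2) (Fin 2) ℂ
  | 0 => 1
  | j+1 => AM (a (j+1)) * DM (x j * y j) * pP j

noncomputable def pR : ℕ → Matrix (Fin 2) (Fin 2) ℂ
  | 0 => 1
  | j+1 => DM (x j * y j) * AM (a j) * pR j

noncomputable def qU : ℕ → Matrix (Fin 2) (Fin 2) ℂ
  | 0 => 1
  | j+1 => qU j * (AM (a j) * DM (x j * y j))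

lemma pP_pR : ∀ j, DM (x j * y j) * pP a x y j * AM (a 0) = pR a x y (j+1)
  | 0 => by simp [pP, pR]
  | j+1 => by
    show DM (x (j+1) * y (j+1)) * (AM (a (j+1)) * DM (x j * y j) * pP a x y j) * AM (a 0)
        = DM (x (j+1) * y (j+1)) * AM (a (j+1)) * pR a x y (j+1)
    rw [← pP_pR j]
    simp only [Matrix.mul_assoc]

lemma pR_JqU : ∀ j, pR a x y j * JM = JM * (qU a x y j)ᵀ
  | 0 => by simp [pR, qU]
  | j+1 => by
    show DM (x j * y j) * AM (a j) * pR a x y j * JM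
        = JM * (qU a x y j * (AM (a j) * DM (x j * y j)))ᵀ
    rw [Matrix.mul_assoc (DM (x j * y j) * AM (a j)), pR_JqU j, Matrix.transpose_mul,
      Matrix.transpose_mul, ← Matrix.mul_assoc, swap_lemma]
    simp only [Matrix.mul_assoc]

lemma trace_pR_qU (j : ℕ) : (pR a x y j).trace = (qU a x y j).trace := by
  have h := pR_JqU a x y j
  calc (pR a x y j).trace = (pR a x y j * (JM * JM)).trace := by rw [JM_JM, Matrix.mul_one]
    _ = ((pR a x y j * JM) * JM).trace := by rw [Matrix.mul_assoc]
    _ = ((JM * (qU a x y j)ᵀ) * JM).trace := by rw [h]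
    _ = (JM * (JM * (qU a x y j)ᵀ)).trace := Matrix.trace_mul_comm _ _
    _ = ((JM * JM) * (qU a x y j)ᵀ).trace := by rw [Matrix.mul_assoc]
    _ = ((qU a x y j)ᵀ).trace := by rw [JM_JM, Matrix.one_mul]
    _ = (qU a x y j).trace := Matrix.trace_transpose _

lemma Wt_pP : ∀ j, j < k → Wt k a x y 0 j = pP a x y j
  | 0, _ => rfl
  | j+1, h => by
    show TM k a x y (0 + j) * Wt k a x y 0 j = pP a x y (j+1)
    rw [Nat.zero_add, Wt_pP j (by omega), TM,
      Nat.mod_eq_of_lt (show j+1 < k by omega), Nat.mod_eq_of_lt (show j < k by omega)]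
    show AM (a (j+1)) * DM (x j * y j) * pP a x y j = AM (a (j+1)) * DM (x j * y j) * pP a x y j
    rfl

lemma CH2 (P : Matrix (Fin 2) (Fin 2) ℂ) :
    P * P = P.trace • P - P.det • (1 : Matrix (Fin 2) (Fin 2) ℂ) := by
  ext i j
  fin_cases i <;> fin_cases j <;>
    simp [Matrix.mul_apply, Fin.sum_univ_two, Matrix.trace_fin_two, Matrix.det_fin_two,
      Matrix.one_apply, Matrix.sub_apply, smul_eq_mul] <;> ring


variable (k : ℕ) (a x y : ℕ → ℂ)

lemma U1_AD (j : ℕ) : U1 (a j) (x j * y j) 0 = AM (a j) * DM (x j * y j) := by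
  rw [AMDM, U1, zero_add]

lemma Uk_qU : ∀ t, ((List.range t).map (fun j => U1 (a j) (x j * y j) 0)).prod = qU a x y t
  | 0 => by simp [qU]
  | t+1 => by
    rw [List.range_succ, List.map_append, List.prod_append, Uk_qU t]
    simp [qU, U1_AD]

noncomputable def vv (m : ℕ) : Fin 2 → ℂ := ![dd k a x y (m+1), dd k a x y m]

lemma vstep (m : ℕ) : vv k a x y (m+1) = (TM k a x y m).mulVec (vv k a x y m) := by
  funext i
  fin_cases i
  · show dd k a x y (m+2) = _
    rw [TM, AMDM]
    show _ = (!![a ((m+1) % k), -(x (m % k) * y (m % k)); 1, 0].mulVec (vv k a x y m)) 0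
    rw [kT_rec]
    simp [Matrix.mulVec, dotProduct, Fin.sum_univ_two, vv]
    ring
  · show dd k a x y (m+1) = _
    rw [TM, AMDM]
    show _ = (!![a ((m+1) % k), -(x (m % k) * y (m % k)); 1, 0].mulVec (vv k a x y m)) 1
    simp [Matrix.mulVec, dotProduct, Fin.sum_univ_two, vv]

lemma vWt (m : ℕ) : ∀ t, vv k a x y (m+t) = (Wt k a x y m t).mulVec (vv k a x y m)
  | 0 => by
    show vv k a x y (m+0) = Matrix.mulVec 1 (vv k a x y m)
    rw [Matrix.one_mulVec, Nat.add_zero]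
  | t+1 => by
    show vv k a x y (m+(t+1)) = (TM k a x y (m+t) * Wt k a x y m t).mulVec (vv k a x y m)
    rw [show m + (t+1) = (m+t)+1 from by ring, vstep, vWt m t, Matrix.mulVec_mulVec]

lemma trace_P (hk : 1 ≤ k) : (Wt k a x y 0 k).trace = (Uk k a x y 0).trace := by
  obtain ⟨K, rfl⟩ : ∃ K, k = K + 1 := ⟨k - 1, by omega⟩
  have h1 : Wt (K+1) a x y 0 (K+1) = AM (a 0) * (DM (x K * y K) * pP a x y K) := by
    show TM (K+1) a x y (0 + K) * Wt (K+1) a x y 0 K = _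
    rw [Nat.zero_add, Wt_pP (K+1) a x y K (by omega), TM, Nat.mod_self,
      Nat.mod_eq_of_lt (by omega), Matrix.mul_assoc]
  have hUk : Uk (K+1) a x y 0 = qU a x y (K+1) := Uk_qU a x y (K+1)
  rw [h1, Matrix.trace_mul_comm, pP_pR, trace_pR_qU, hUk]

end KTR

/-- **Appendix, equation (81)**: `D_{n+1} = Q^k(0) · D_n − (u_1 ⋯ u_k) · D_{n−1}`. -/
theorem kToeplitz_det_three_term_recurrence
    (k : ℕ) (hk : 1 ≤ k) (a x y : ℕ → ℂ) (n : ℕ) (hn : 1 ≤ n) :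
    Ddet k a x y (n + 1) =
      (Uk k a x y 0).trace * Ddet k a x y n -
        (∏ j ∈ Finset.range k, x j * y j) * Ddet k a x y (n - 1) := by
  obtain ⟨m, rfl⟩ : ∃ m, n = m + 1 := ⟨n - 1, by omega⟩
  set P := KTR.Wt k a x y 0 k with hP
  have hper : ∀ j : ℕ, KTR.vv k a x y ((j+1) * k) = P.mulVec (KTR.vv k a x y (j*k)) := by
    intro j
    have h1 := KTR.vWt k a x y (j*k) k
    rw [KTR.Wt_shift k a x y j k] at h1
    rw [show (j+1)*k = j*k + k from by ring, h1]
  have h2 : KTR.vv k a x y ((m+2) * k)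
      = P.trace • KTR.vv k a x y ((m+1)*k) - P.det • KTR.vv k a x y (m*k) := by
    rw [show m+2 = (m+1)+1 from rfl, hper (m+1), hper m, Matrix.mulVec_mulVec,
      KTR.CH2 P, Matrix.sub_mulVec, Matrix.smul_mulVec, Matrix.smul_mulVec,
      Matrix.one_mulVec, ← hper m]
  have h3 := congrFun h2 1
  simp only [KTR.vv, Matrix.cons_val_one, Matrix.cons_val_zero, Matrix.head_cons, Pi.sub_apply, Pi.smul_apply,
    smul_eq_mul] at h3
  have htr : P.trace = (Uk k a x y 0).trace := KTR.trace_P k a x y hk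
  have hdet : P.det = ∏ j ∈ Finset.range k, x j * y j := by
    rw [hP, KTR.det_Wt]
    exact Finset.prod_congr rfl (fun j hj => by
      rw [Nat.mod_eq_of_lt (Finset.mem_range.mp hj)])
  have hDd : ∀ t, Ddet k a x y t = KTR.dd k a x y (t * k) := fun t => rfl
  rw [hDd, hDd, hDd, Nat.add_sub_cancel, show m+1+1 = m+2 from rfl, h3, htr, hdet]
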